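/- arXiv:1605.04489 — 2 statements merged into one kernel-verified Lean document; each statement's English description precedes it below -/
import Mathlib

section
/- Let 𝕋 = (T,m,e) be a 2-monad on Q-Cat such that T(y_X):TX→TPX is a fully faithful Q-functor for every Q-category X. Then λ_X = ←((Ty_X)_*):TPX→PTX defines a flat distributive law of 𝕋 over the presheaf 2-monad 𝔓, and it is the only flat distributive law of 𝕋 over 𝔓. -/
/-!
Common framework: quantaloids, `Q`-categories, `Q`-functors, `Q`-distributors,
(co)presheaf constructions, 2-monads on `Q`-Cat, lax distributive laws over the
presheaf 2-monad, and lax extensions to `Q`-Dist.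
-/

set_option autoImplicit false

universe u

namespace QT

/-- A (small) quantaloid: a category enriched in complete lattices, with
composition preserving suprema in each variable. -/
structure Quantaloid : Type (u + 1) where
  Obj : Type u
  Hom : Obj → Obj → Type u
  lat : ∀ a b, CompleteLattice (Hom a b)
  comp : ∀ {a b c}, Hom b c → Hom a b → Hom a c
  idm : ∀ a, Hom a a
  comp_assoc : ∀ {a b c d} (w : Hom c d) (v : Hom b c) (u : Hom a b),
    comp (comp w v) u = comp w (comp v u)
  comp_idm : ∀ {a b} (u : Hom a b), comp u (idm a) = u
  idm_comp : ∀ {a b} (u : Hom a b), comp (idm b) u = u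
  comp_sSup : ∀ {a b c} (v : Hom b c) (S : Set (Hom a b)),
    comp v (sSup S) = ⨆ u ∈ S, comp v u
  sSup_comp : ∀ {a b c} (S : Set (Hom b c)) (u : Hom a b),
    comp (sSup S) u = ⨆ v ∈ S, comp v u

attribute [instance] Quantaloid.lat

namespace Quantaloid

variable {Q : Quantaloid.{u}}

theorem comp_iSup {a b c : Q.Obj} (v : Q.Hom b c) {ι : Sort*} (f : ι → Q.Hom a b) :
    Q.comp v (⨆ i, f i) = ⨆ i, Q.comp v (f i) := by
  rw [iSup, Q.comp_sSup, iSup_range]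

theorem iSup_comp {a b c : Q.Obj} {ι : Sort*} (f : ι → Q.Hom b c) (u : Q.Hom a b) :
    Q.comp (⨆ i, f i) u = ⨆ i, Q.comp (f i) u := by
  rw [iSup, Q.sSup_comp, iSup_range]

theorem comp_le_comp {a b c : Q.Obj} {v v' : Q.Hom b c} {u u' : Q.Hom a b}
    (hv : v ≤ v') (hu : u ≤ u') : Q.comp v u ≤ Q.comp v' u' := by
  have h1 : Q.comp v' u ≤ Q.comp v' u' := by
    have h := Q.comp_sSup v' {u, u'}
    rw [sSup_pair, sup_eq_right.mpr hu] at h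
    rw [h]
    exact le_biSup (fun x => Q.comp v' x) (Set.mem_insert _ _)
  have h2 : Q.comp v u ≤ Q.comp v' u := by
    have h := Q.sSup_comp {v, v'} u
    rw [sSup_pair, sup_eq_right.mpr hv] at h
    rw [h]
    exact le_biSup (fun x => Q.comp x u) (Set.mem_insert _ _)
  exact le_trans h2 h1

/-- Internal hom `w ↙ u` (right adjoint to `- ∘ u`). -/
def lda {a b c : Q.Obj} (w : Q.Hom a c) (u : Q.Hom a b) : Q.Hom b c :=
  sSup {v | Q.comp v u ≤ w}

/-- Internal hom `v ↘ w` (right adjoint to `v ∘ -`). -/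
def rda {a b c : Q.Obj} (v : Q.Hom b c) (w : Q.Hom a c) : Q.Hom a b :=
  sSup {u | Q.comp v u ≤ w}

theorem le_lda {a b c : Q.Obj} {v : Q.Hom b c} {u : Q.Hom a b} {w : Q.Hom a c} :
    Q.comp v u ≤ w ↔ v ≤ lda w u := by
  constructor
  · exact fun h => le_sSup h
  · intro h
    calc Q.comp v u ≤ Q.comp (lda w u) u := comp_le_comp h le_rfl
      _ ≤ w := by
          rw [lda, Q.sSup_comp]; exact iSup₂_le fun v' hv' => hv'

theorem le_rda {a b c : Q.Obj} {v : Q.Hom b c} {u : Q.Hom a b} {w : Q.Hom a c} :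
    Q.comp v u ≤ w ↔ u ≤ rda v w := by
  constructor
  · exact fun h => le_sSup h
  · intro h
    calc Q.comp v u ≤ Q.comp v (rda v w) := comp_le_comp le_rfl h
      _ ≤ w := by
          rw [rda, Q.comp_sSup]; exact iSup₂_le fun u' hu' => hu'

end Quantaloid

variable {Q : Quantaloid.{u}}

/-- `Q`-relations between families of sets indexed by the objects of `Q`
(i.e. sets over `ob Q`, presented fibrewise). -/
abbrev QRel (Q : Quantaloid.{u}) (X Y : Q.Obj → Type u) : Type u :=
  ∀ p q, X p → Y q → Q.Hom p q

/-- Composition of `Q`-relations. -/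
def QRel.comp {X Y Z : Q.Obj → Type u} (ψ : QRel Q Y Z) (φ : QRel Q X Y) : QRel Q X Z :=
  fun p r x z => ⨆ q, ⨆ y : Y q, Q.comp (ψ q r y z) (φ p q x y)

theorem QRel.comp_mono {X Y Z : Q.Obj → Type u} {ψ ψ' : QRel Q Y Z} {φ φ' : QRel Q X Y}
    (h1 : ψ ≤ ψ') (h2 : φ ≤ φ') : QRel.comp ψ φ ≤ QRel.comp ψ' φ' := by
  intro p r x z
  exact iSup_mono fun q => iSup_mono fun y =>
    Quantaloid.comp_le_comp (h1 q r y z) (h2 p q x y)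

theorem QRel.comp_assoc {W X Y Z : Q.Obj → Type u}
    (χ : QRel Q Y Z) (ψ : QRel Q X Y) (φ : QRel Q W X) :
    QRel.comp (QRel.comp χ ψ) φ = QRel.comp χ (QRel.comp ψ φ) := by
  funext p s w z
  simp only [QRel.comp, Quantaloid.iSup_comp, Quantaloid.comp_iSup]
  apply le_antisymm
  · exact iSup₂_le fun q x => iSup₂_le fun r y =>
      le_iSup_of_le r (le_iSup_of_le y (le_iSup_of_le q (le_iSup_of_le x
        (Q.comp_assoc _ _ _).le)))
  · exact iSup₂_le fun r y => iSup₂_le fun q x =>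
      le_iSup_of_le q (le_iSup_of_le x (le_iSup_of_le r (le_iSup_of_le y
        (Q.comp_assoc _ _ _).ge)))

/-- A (small) `Q`-category. -/
structure QCat (Q : Quantaloid.{u}) : Type (u + 1) where
  el : Q.Obj → Type u
  hom : QRel Q el el
  refl : ∀ p (x : el p), Q.idm p ≤ hom p p x x
  trans : QRel.comp hom hom ≤ hom

/-- Pointwise transitivity in a `Q`-category. -/
theorem QCat.hom_comp_le (X : QCat Q) {p q r : Q.Obj}
    (x : X.el p) (y : X.el q) (z : X.el r) :
    Q.comp (X.hom q r y z) (X.hom p q x y) ≤ X.hom p r x z :=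
  le_trans
    (le_iSup_of_le q (le_iSup (fun y' : X.el q => Q.comp (X.hom q r y' z) (X.hom p q x y')) y))
    (X.trans p r x z)

/-- Any `Q`-relation into a `Q`-category embeds into its post-composite with the hom. -/
theorem QRel.le_hom_comp {W : Q.Obj → Type u} {Z : QCat Q} (ρ : QRel Q W Z.el) :
    ρ ≤ QRel.comp Z.hom ρ := by
  intro p q x z
  calc ρ p q x z = Q.comp (Q.idm q) (ρ p q x z) := (Q.idm_comp _).symm
    _ ≤ Q.comp (Z.hom q q z z) (ρ p q x z) := Quantaloid.comp_le_comp (Z.refl q z) le_rfl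
    _ ≤ _ := le_iSup_of_le q
        (le_iSup (fun z' : Z.el q => Q.comp (Z.hom q q z' z) (ρ p q x z')) z)

/-- Any `Q`-relation out of a `Q`-category embeds into its pre-composite with the hom. -/
theorem QRel.le_comp_hom {X : QCat Q} {W : Q.Obj → Type u} (ρ : QRel Q X.el W) :
    ρ ≤ QRel.comp ρ X.hom := by
  intro p q x z
  calc ρ p q x z = Q.comp (ρ p q x z) (Q.idm p) := (Q.comp_idm _).symm
    _ ≤ Q.comp (ρ p q x z) (X.hom p p x x) := Quantaloid.comp_le_comp le_rfl (X.refl p x)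
    _ ≤ _ := le_iSup_of_le p
        (le_iSup (fun x' : X.el p => Q.comp (ρ p q x' z) (X.hom p p x x')) x)

/-- A `Q`-functor. -/
structure QFun (X Y : QCat Q) : Type u where
  app : ∀ p, X.el p → Y.el p
  mono : ∀ p q (x : X.el p) (x' : X.el q),
    X.hom p q x x' ≤ Y.hom p q (app p x) (app q x')

def QFun.id (X : QCat Q) : QFun X X :=
  ⟨fun _ x => x, fun _ _ _ _ => le_rfl⟩

def QFun.comp {X Y Z : QCat Q} (g : QFun Y Z) (f : QFun X Y) : QFun X Z :=
  ⟨fun p x => g.app p (f.app p x),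
   fun p q x x' => le_trans (f.mono p q x x') (g.mono p q (f.app p x) (f.app q x'))⟩

/-- The (pointwise) order of `Q`-functors. -/
instance {X Y : QCat Q} : Preorder (QFun X Y) where
  le f g := ∀ p (x : X.el p), Q.idm p ≤ Y.hom p p (f.app p x) (g.app p x)
  le_refl f p x := Y.refl p (f.app p x)
  le_trans f g h h1 h2 := by
    intro p x
    calc Q.idm p = Q.comp (Q.idm p) (Q.idm p) := (Q.comp_idm _).symm
      _ ≤ Q.comp (Y.hom p p (g.app p x) (h.app p x)) (Y.hom p p (f.app p x) (g.app p x)) :=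
          Quantaloid.comp_le_comp (h2 p x) (h1 p x)
      _ ≤ Y.hom p p (f.app p x) (h.app p x) := Y.hom_comp_le _ _ _

/-- A `Q`-distributor between `Q`-categories. -/
structure QDist (X Y : QCat Q) : Type u where
  rel : QRel Q X.el Y.el
  compat : QRel.comp Y.hom (QRel.comp rel X.hom) ≤ rel

instance {X Y : QCat Q} : PartialOrder (QDist X Y) where
  le φ ψ := φ.rel ≤ ψ.rel
  le_refl φ := le_refl φ.rel
  le_trans _ _ _ h h' := by
    intro p q x y
    exact le_trans (h p q x y) (h' p q x y)
  le_antisymm φ ψ h h' := by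
    have hr : φ.rel = ψ.rel := le_antisymm h h'
    cases φ; cases ψ; cases hr; rfl

theorem QDist.hom_comp_le {X Y : QCat Q} (φ : QDist X Y) :
    QRel.comp Y.hom φ.rel ≤ φ.rel :=
  le_trans (QRel.comp_mono le_rfl (QRel.le_comp_hom φ.rel)) φ.compat

theorem QDist.comp_hom_le {X Y : QCat Q} (φ : QDist X Y) :
    QRel.comp φ.rel X.hom ≤ φ.rel :=
  le_trans (QRel.le_hom_comp _) φ.compat

theorem QDist.rel_comp_hom {X Y : QCat Q} (φ : QDist X Y) {p q r : Q.Obj}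
    (x : X.el p) (x' : X.el q) (y : Y.el r) :
    Q.comp (φ.rel q r x' y) (X.hom p q x x') ≤ φ.rel p r x y :=
  le_trans
    (le_iSup_of_le q (le_iSup (fun x'' : X.el q => Q.comp (φ.rel q r x'' y) (X.hom p q x x'')) x'))
    (φ.comp_hom_le p r x y)

theorem QDist.hom_comp_rel {X Y : QCat Q} (φ : QDist X Y) {p q r : Q.Obj}
    (x : X.el p) (y : Y.el q) (y' : Y.el r) :
    Q.comp (Y.hom q r y y') (φ.rel p q x y) ≤ φ.rel p r x y' :=
  le_trans
    (le_iSup_of_le q (le_iSup (fun y'' : Y.el q => Q.comp (Y.hom q r y'' y') (φ.rel p q x y'')) y))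
    (φ.hom_comp_le p r x y')

/-- Composition of `Q`-distributors. -/
def QDist.comp {X Y Z : QCat Q} (ψ : QDist Y Z) (φ : QDist X Y) : QDist X Z :=
  ⟨QRel.comp ψ.rel φ.rel, by
    calc QRel.comp Z.hom (QRel.comp (QRel.comp ψ.rel φ.rel) X.hom)
        = QRel.comp (QRel.comp Z.hom ψ.rel) (QRel.comp φ.rel X.hom) := by
          rw [QRel.comp_assoc, QRel.comp_assoc]
      _ ≤ QRel.comp ψ.rel φ.rel :=
          QRel.comp_mono ψ.hom_comp_le φ.comp_hom_le⟩

/-- The identity distributor `1_X^*` on a `Q`-category. -/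
def QCat.homDist (X : QCat Q) : QDist X X :=
  ⟨X.hom, le_trans (QRel.comp_mono le_rfl X.trans) X.trans⟩

/-- The graph `f_*` of a `Q`-functor. -/
def QFun.graph {X Y : QCat Q} (f : QFun X Y) : QDist X Y :=
  ⟨fun p q x y => Y.hom p q (f.app p x) y, by
    intro p q x y
    simp only [QRel.comp, Quantaloid.comp_iSup, Quantaloid.iSup_comp]
    refine iSup₂_le fun q' y' => iSup₂_le fun p' x' => ?_
    calc Q.comp (Y.hom q' q y' y) (Q.comp (Y.hom p' q' (f.app p' x') y') (X.hom p p' x x'))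
        ≤ Q.comp (Y.hom q' q y' y)
            (Q.comp (Y.hom p' q' (f.app p' x') y') (Y.hom p p' (f.app p x) (f.app p' x'))) :=
          Quantaloid.comp_le_comp le_rfl
            (Quantaloid.comp_le_comp le_rfl (f.mono p p' x x'))
      _ ≤ Q.comp (Y.hom q' q y' y) (Y.hom p q' (f.app p x) y') :=
          Quantaloid.comp_le_comp le_rfl (Y.hom_comp_le _ _ _)
      _ ≤ Y.hom p q (f.app p x) y := Y.hom_comp_le _ _ _⟩

/-- The cograph `f^*` of a `Q`-functor. -/
def QFun.cograph {X Y : QCat Q} (f : QFun X Y) : QDist Y X :=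
  ⟨fun p q y x => Y.hom p q y (f.app q x), by
    intro p q y x
    simp only [QRel.comp, Quantaloid.comp_iSup, Quantaloid.iSup_comp]
    refine iSup₂_le fun q' x' => iSup₂_le fun p' y' => ?_
    calc Q.comp (X.hom q' q x' x) (Q.comp (Y.hom p' q' y' (f.app q' x')) (Y.hom p p' y y'))
        ≤ Q.comp (Y.hom q' q (f.app q' x') (f.app q x))
            (Q.comp (Y.hom p' q' y' (f.app q' x')) (Y.hom p p' y y')) :=
          Quantaloid.comp_le_comp (f.mono q' q x' x) le_rfl
      _ ≤ Q.comp (Y.hom q' q (f.app q' x') (f.app q x)) (Y.hom p q' y (f.app q' x')) :=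
          Quantaloid.comp_le_comp le_rfl (Y.hom_comp_le _ _ _)
      _ ≤ Y.hom p q y (f.app q x) := Y.hom_comp_le _ _ _⟩

/-- The presheaf `Q`-category `P X`. -/
def QCat.P (X : QCat Q) : QCat Q where
  el s := { σ : ∀ p, X.el p → Q.Hom p s //
    ∀ p q (x : X.el p) (x' : X.el q), Q.comp (σ q x') (X.hom p q x x') ≤ σ p x }
  hom s s' σ σ' := ⨅ p, ⨅ x : X.el p, Quantaloid.lda (σ'.1 p x) (σ.1 p x)
  refl := by
    intro s σ
    refine le_iInf fun p => le_iInf fun x => Quantaloid.le_lda.mp ?_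
    rw [Q.idm_comp]
  trans := by
    intro s s'' σ σ''
    refine iSup₂_le fun s' σ' => ?_
    refine le_iInf fun p => le_iInf fun x => Quantaloid.le_lda.mp ?_
    rw [Q.comp_assoc]
    have h1 : Q.comp (⨅ p', ⨅ x' : X.el p', Quantaloid.lda (σ'.1 p' x') (σ.1 p' x'))
        (σ.1 p x) ≤ σ'.1 p x :=
      Quantaloid.le_lda.mpr (le_trans (iInf_le _ p) (iInf_le _ x))
    have h2 : Q.comp (⨅ p', ⨅ x' : X.el p', Quantaloid.lda (σ''.1 p' x') (σ'.1 p' x'))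
        (σ'.1 p x) ≤ σ''.1 p x :=
      Quantaloid.le_lda.mpr (le_trans (iInf_le _ p) (iInf_le _ x))
    exact le_trans (Quantaloid.comp_le_comp le_rfl h1) h2

/-- The copresheaf `Q`-category `P† X`. -/
def QCat.Pd (X : QCat Q) : QCat Q where
  el s := { τ : ∀ q, X.el q → Q.Hom s q //
    ∀ p q (x : X.el p) (x' : X.el q), Q.comp (X.hom p q x x') (τ p x) ≤ τ q x' }
  hom s s' τ τ' := ⨅ q, ⨅ x : X.el q, Quantaloid.rda (τ'.1 q x) (τ.1 q x)
  refl := by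
    intro s τ
    refine le_iInf fun q => le_iInf fun x => Quantaloid.le_rda.mp ?_
    rw [Q.comp_idm]
  trans := by
    intro s s'' τ τ''
    refine iSup₂_le fun s' τ' => ?_
    refine le_iInf fun q => le_iInf fun x => Quantaloid.le_rda.mp ?_
    rw [← Q.comp_assoc]
    have h1 : Q.comp (τ''.1 q x)
        (⨅ q', ⨅ x' : X.el q', Quantaloid.rda (τ''.1 q' x') (τ'.1 q' x')) ≤ τ'.1 q x :=
      Quantaloid.le_rda.mpr (le_trans (iInf_le _ q) (iInf_le _ x))
    have h2 : Q.comp (τ'.1 q x)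
        (⨅ q', ⨅ x' : X.el q', Quantaloid.rda (τ'.1 q' x') (τ.1 q' x')) ≤ τ.1 q x :=
      Quantaloid.le_rda.mpr (le_trans (iInf_le _ q) (iInf_le _ x))
    exact le_trans (Quantaloid.comp_le_comp h1 le_rfl) h2

/-- The Yoneda embedding `y_X : X → P X`. -/
def QCat.y (X : QCat Q) : QFun X X.P where
  app p x := ⟨fun q x' => X.hom q p x' x,
    fun p' q' x1 x2 => X.hom_comp_le x1 x2 x⟩
  mono := by
    intro p q x x'
    refine le_iInf fun r => le_iInf fun x'' => Quantaloid.le_lda.mp ?_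
    exact X.hom_comp_le x'' x x'

/-- The co-Yoneda embedding `y†_X : X → P† X`. -/
def QCat.yd (X : QCat Q) : QFun X X.Pd where
  app p x := ⟨fun q x' => X.hom p q x x',
    fun p' q' x1 x2 => X.hom_comp_le x x1 x2⟩
  mono := by
    intro p q x x'
    refine le_iInf fun r => le_iInf fun x'' => Quantaloid.le_rda.mp ?_
    exact X.hom_comp_le x x' x''

/-- `φ^→ : P Y → P X`, `τ ↦ τ ∘ φ`. -/
def QDist.fwd {X Y : QCat Q} (φ : QDist X Y) : QFun Y.P X.P where
  app s τ := ⟨fun p x => ⨆ q, ⨆ y : Y.el q, Q.comp (τ.1 q y) (φ.rel p q x y), by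
    intro p q x x'
    rw [Quantaloid.iSup_comp]
    refine iSup_le fun r => ?_
    rw [Quantaloid.iSup_comp]
    refine iSup_le fun y => ?_
    rw [Q.comp_assoc]
    exact le_iSup_of_le r (le_iSup_of_le y
      (Quantaloid.comp_le_comp le_rfl (φ.rel_comp_hom x x' y)))⟩
  mono := by
    intro s s' τ τ'
    refine le_iInf fun p => le_iInf fun x => Quantaloid.le_lda.mp ?_
    rw [Quantaloid.comp_iSup]
    refine iSup_le fun r => ?_
    rw [Quantaloid.comp_iSup]
    refine iSup_le fun y => ?_
    rw [← Q.comp_assoc]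
    have h : Q.comp (Y.P.hom s s' τ τ') (τ.1 r y) ≤ τ'.1 r y :=
      Quantaloid.le_lda.mpr (le_trans (iInf_le _ r) (iInf_le _ y))
    exact le_iSup_of_le r (le_iSup_of_le y (Quantaloid.comp_le_comp h le_rfl))

/-- `φ^↞ : P† X → P† Y`, `σ ↦ φ ∘ σ`. -/
def QDist.bwd {X Y : QCat Q} (φ : QDist X Y) : QFun X.Pd Y.Pd where
  app s σ := ⟨fun q y => ⨆ p, ⨆ x : X.el p, Q.comp (φ.rel p q x y) (σ.1 p x), by
    intro p q y y'
    rw [Quantaloid.comp_iSup]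
    refine iSup_le fun r => ?_
    rw [Quantaloid.comp_iSup]
    refine iSup_le fun x => ?_
    rw [← Q.comp_assoc]
    exact le_iSup_of_le r (le_iSup_of_le x
      (Quantaloid.comp_le_comp (φ.hom_comp_rel x y y') le_rfl))⟩
  mono := by
    intro s s' σ σ'
    refine le_iInf fun q => le_iInf fun y => Quantaloid.le_rda.mp ?_
    rw [Quantaloid.iSup_comp]
    refine iSup_le fun r => ?_
    rw [Quantaloid.iSup_comp]
    refine iSup_le fun x => ?_
    rw [Q.comp_assoc]
    have h : Q.comp (σ'.1 r x) (X.Pd.hom s s' σ σ') ≤ σ.1 r x :=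
      Quantaloid.le_rda.mpr (le_trans (iInf_le _ r) (iInf_le _ x))
    exact le_iSup_of_le r (le_iSup_of_le x (Quantaloid.comp_le_comp le_rfl h))

/-- `φ_→ : P X → P Y`, `σ ↦ σ ↙ φ`. -/
def QDist.fwdr {X Y : QCat Q} (φ : QDist X Y) : QFun X.P Y.P where
  app s σ := ⟨fun q y => ⨅ p, ⨅ x : X.el p, Quantaloid.lda (σ.1 p x) (φ.rel p q x y), by
    intro q q' y y'
    refine le_iInf fun p => le_iInf fun x => Quantaloid.le_lda.mp ?_
    rw [Q.comp_assoc]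
    have h1 : Q.comp (Y.hom q q' y y') (φ.rel p q x y) ≤ φ.rel p q' x y' :=
      φ.hom_comp_rel x y y'
    have h2 : Q.comp ((⨅ p', ⨅ x' : X.el p',
        Quantaloid.lda (σ.1 p' x') (φ.rel p' q' x' y')) : Q.Hom q' s) (φ.rel p q' x y')
        ≤ σ.1 p x :=
      Quantaloid.le_lda.mpr (le_trans (iInf_le _ p) (iInf_le _ x))
    exact le_trans (Quantaloid.comp_le_comp le_rfl h1) h2⟩
  mono := by
    intro s s' σ σ'
    refine le_iInf fun q => le_iInf fun y => Quantaloid.le_lda.mp ?_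
    refine le_iInf fun p => le_iInf fun x => Quantaloid.le_lda.mp ?_
    rw [Q.comp_assoc]
    have h1 : Q.comp ((⨅ p', ⨅ x' : X.el p',
        Quantaloid.lda (σ.1 p' x') (φ.rel p' q x' y)) : Q.Hom q s) (φ.rel p q x y)
        ≤ σ.1 p x :=
      Quantaloid.le_lda.mpr (le_trans (iInf_le _ p) (iInf_le _ x))
    have h2 : Q.comp (X.P.hom s s' σ σ') (σ.1 p x) ≤ σ'.1 p x :=
      Quantaloid.le_lda.mpr (le_trans (iInf_le _ p) (iInf_le _ x))
    exact le_trans (Quantaloid.comp_le_comp le_rfl h1) h2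

/-- Isbell `φ↑ : P X → P† Y`, `σ ↦ φ ↙ σ`. -/
def QDist.up {X Y : QCat Q} (φ : QDist X Y) : QFun X.P Y.Pd where
  app s σ := ⟨fun q y => ⨅ p, ⨅ x : X.el p, Quantaloid.lda (φ.rel p q x y) (σ.1 p x), by
    intro q q' y y'
    refine le_iInf fun p => le_iInf fun x => Quantaloid.le_lda.mp ?_
    rw [Q.comp_assoc]
    have h1 : Q.comp ((⨅ p', ⨅ x' : X.el p',
        Quantaloid.lda (φ.rel p' q x' y) (σ.1 p' x')) : Q.Hom s q) (σ.1 p x)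
        ≤ φ.rel p q x y :=
      Quantaloid.le_lda.mpr (le_trans (iInf_le _ p) (iInf_le _ x))
    exact le_trans (Quantaloid.comp_le_comp le_rfl h1) (φ.hom_comp_rel x y y')⟩
  mono := by
    intro s s' σ σ'
    refine le_iInf fun q => le_iInf fun y => Quantaloid.le_rda.mp ?_
    refine le_iInf fun p => le_iInf fun x => Quantaloid.le_lda.mp ?_
    rw [Q.comp_assoc]
    have h1 : Q.comp (X.P.hom s s' σ σ') (σ.1 p x) ≤ σ'.1 p x :=
      Quantaloid.le_lda.mpr (le_trans (iInf_le _ p) (iInf_le _ x))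
    have h2 : Q.comp ((⨅ p', ⨅ x' : X.el p',
        Quantaloid.lda (φ.rel p' q x' y) (σ'.1 p' x')) : Q.Hom s' q) (σ'.1 p x)
        ≤ φ.rel p q x y :=
      Quantaloid.le_lda.mpr (le_trans (iInf_le _ p) (iInf_le _ x))
    exact le_trans (Quantaloid.comp_le_comp le_rfl h1) h2

/-- Isbell `φ↓ : P† Y → P X`, `τ ↦ τ ↘ φ`. -/
def QDist.down {X Y : QCat Q} (φ : QDist X Y) : QFun Y.Pd X.P where
  app s τ := ⟨fun p x => ⨅ q, ⨅ y : Y.el q, Quantaloid.rda (τ.1 q y) (φ.rel p q x y), by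
    intro p p' x x'
    refine le_iInf fun q => le_iInf fun y => Quantaloid.le_rda.mp ?_
    rw [← Q.comp_assoc]
    have h1 : Q.comp (τ.1 q y) ((⨅ q', ⨅ y' : Y.el q',
        Quantaloid.rda (τ.1 q' y') (φ.rel p' q' x' y')) : Q.Hom p' s)
        ≤ φ.rel p' q x' y :=
      Quantaloid.le_rda.mpr (le_trans (iInf_le _ q) (iInf_le _ y))
    exact le_trans (Quantaloid.comp_le_comp h1 le_rfl) (φ.rel_comp_hom x x' y)⟩
  mono := by
    intro s s' τ τ'
    refine le_iInf fun p => le_iInf fun x => Quantaloid.le_lda.mp ?_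
    refine le_iInf fun q => le_iInf fun y => Quantaloid.le_rda.mp ?_
    rw [← Q.comp_assoc]
    have h1 : Q.comp (τ'.1 q y) (Y.Pd.hom s s' τ τ') ≤ τ.1 q y :=
      Quantaloid.le_rda.mpr (le_trans (iInf_le _ q) (iInf_le _ y))
    have h2 : Q.comp (τ.1 q y) ((⨅ q', ⨅ y' : Y.el q',
        Quantaloid.rda (τ.1 q' y') (φ.rel p q' x y')) : Q.Hom p s)
        ≤ φ.rel p q x y :=
      Quantaloid.le_rda.mpr (le_trans (iInf_le _ q) (iInf_le _ y))
    exact le_trans (Quantaloid.comp_le_comp h1 le_rfl) h2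

/-- The transpose `←φ : Y → P X` of a distributor `φ : X ⇸ Y`. -/
def QDist.transpose {X Y : QCat Q} (φ : QDist X Y) : QFun Y X.P where
  app q y := ⟨fun p x => φ.rel p q x y,
    fun p q' x x' => φ.rel_comp_hom x x' y⟩
  mono := by
    intro q q' y y'
    refine le_iInf fun p => le_iInf fun x => Quantaloid.le_lda.mp ?_
    exact φ.hom_comp_rel x y y'

/-- The inverse of transposition. -/
def QFun.untranspose {X Y : QCat Q} (g : QFun Y X.P) : QDist X Y :=
  ⟨fun p q x y => (g.app q y).1 p x, by
    intro p q x y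
    simp only [QRel.comp, Quantaloid.comp_iSup, Quantaloid.iSup_comp]
    refine iSup₂_le fun q' y' => iSup₂_le fun p' x' => ?_
    have h1 : Q.comp ((g.app q' y').1 p' x') (X.hom p p' x x') ≤ (g.app q' y').1 p x :=
      (g.app q' y').2 p p' x x'
    have h2 : Q.comp (Y.hom q' q y' y) ((g.app q' y').1 p x) ≤ (g.app q y).1 p x :=
      Quantaloid.le_lda.mpr
        (le_trans (g.mono q' q y' y) (le_trans (iInf_le _ p) (iInf_le _ x)))
    exact le_trans (Quantaloid.comp_le_comp le_rfl h1) h2⟩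

/-- `f_! := (f^*)^→ : P X → P Y`. -/
def pshf {X Y : QCat Q} (f : QFun X Y) : QFun X.P Y.P := f.cograph.fwd

/-- `f^! := (f_*)^→ : P Y → P X`. -/
def pshb {X Y : QCat Q} (f : QFun X Y) : QFun Y.P X.P := f.graph.fwd

/-- `f_† := (f_*)^↞ : P† X → P† Y`. -/
def cpsf {X Y : QCat Q} (f : QFun X Y) : QFun X.Pd Y.Pd := f.graph.bwd

/-- `f^† := (f^*)^↞ : P† Y → P† X`. -/
def cpsb {X Y : QCat Q} (f : QFun X Y) : QFun Y.Pd X.Pd := f.cograph.bwd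

/-- `sup_{P X} = y_X^! : P P X → P X`: the multiplication of the presheaf 2-monad. -/
def supP (X : QCat Q) : QFun X.P.P X.P := pshb X.y

/-- `inf_{P† X} = (y†_X)^† : P† P† X → P† X`: the multiplication of the copresheaf
2-monad. -/
def infPd (X : QCat Q) : QFun X.Pd.Pd X.Pd := cpsb X.yd

/-- Adjunction `f ⊣ g` in `Q`-Cat. -/
def QAdj {X Y : QCat Q} (f : QFun X Y) (g : QFun Y X) : Prop :=
  QFun.id X ≤ g.comp f ∧ f.comp g ≤ QFun.id Y

/-- Fully faithful `Q`-functors. -/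
def QFun.FullyFaithful {X Y : QCat Q} (f : QFun X Y) : Prop :=
  ∀ p q (x : X.el p) (x' : X.el q), X.hom p q x x' = Y.hom p q (f.app p x) (f.app q x')

/-- A `Q`-closure operation on a `Q`-category. -/
def IsClosureOp (Z : QCat Q) (c : QFun Z Z) : Prop :=
  QFun.id Z ≤ c ∧ c.comp c = c

/-- A 2-functor on `Q`-Cat. -/
structure TwoFunctor (Q : Quantaloid.{u}) : Type (u + 1) where
  obj : QCat Q → QCat Q
  map : ∀ {X Y : QCat Q}, QFun X Y → QFun (obj X) (obj Y)
  map_id : ∀ X : QCat Q, map (QFun.id X) = QFun.id (obj X)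
  map_comp : ∀ {X Y Z : QCat Q} (g : QFun Y Z) (f : QFun X Y),
    map (g.comp f) = (map g).comp (map f)
  map_mono : ∀ {X Y : QCat Q} {f g : QFun X Y}, f ≤ g → map f ≤ map g

/-- A 2-monad on `Q`-Cat. -/
structure TwoMonad (Q : Quantaloid.{u}) extends TwoFunctor Q where
  unit : ∀ X : QCat Q, QFun X (obj X)
  mult : ∀ X : QCat Q, QFun (obj (obj X)) (obj X)
  unit_nat : ∀ {X Y : QCat Q} (f : QFun X Y), (unit Y).comp f = (map f).comp (unit X)
  mult_nat : ∀ {X Y : QCat Q} (f : QFun X Y),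
    (mult Y).comp (map (map f)) = (map f).comp (mult X)
  mult_unit : ∀ X : QCat Q, (mult X).comp (unit (obj X)) = QFun.id (obj X)
  mult_map_unit : ∀ X : QCat Q, (mult X).comp (map (unit X)) = QFun.id (obj X)
  mult_assoc : ∀ X : QCat Q, (mult X).comp (map (mult X)) = (mult X).comp (mult (obj X))

/-- The type of families `λ_X : T P X → P T X`. -/
abbrev LamFamily (T : TwoFunctor Q) : Type (u + 1) :=
  ∀ X : QCat Q, QFun (T.obj X.P) ((T.obj X).P)

/-- Lax naturality law (a): `(Tf)_! ∘ λ_X ≤ λ_Y ∘ T(f_!)`. -/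
def LawA (T : TwoFunctor Q) (lam : LamFamily T) : Prop :=
  ∀ (X Y : QCat Q) (f : QFun X Y),
    (pshf (T.map f)).comp (lam X) ≤ (lam Y).comp (T.map (pshf f))

/-- Lax `P`-unit law (b): `y_{TX} ≤ λ_X ∘ T y_X`. -/
def LawB (T : TwoFunctor Q) (lam : LamFamily T) : Prop :=
  ∀ X : QCat Q, QCat.y (T.obj X) ≤ (lam X).comp (T.map X.y)

/-- The `P`-unit law (b) holding strictly (flatness). -/
def LawBstrict (T : TwoFunctor Q) (lam : LamFamily T) : Prop :=
  ∀ X : QCat Q, (lam X).comp (T.map X.y) = QCat.y (T.obj X)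

/-- Lax `P`-multiplication law (c): `s_{TX} ∘ (λ_X)_! ∘ λ_{PX} ≤ λ_X ∘ T s_X`. -/
def LawC (T : TwoFunctor Q) (lam : LamFamily T) : Prop :=
  ∀ X : QCat Q,
    (supP (T.obj X)).comp ((pshf (lam X)).comp (lam X.P)) ≤ (lam X).comp (T.map (supP X))

/-- Lax `T`-unit law (d): `(e_X)_! ≤ λ_X ∘ e_{PX}`. -/
def LawD (M : TwoMonad Q) (lam : LamFamily M.toTwoFunctor) : Prop :=
  ∀ X : QCat Q, pshf (M.unit X) ≤ (lam X).comp (M.unit X.P)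

/-- Lax `T`-multiplication law (e): `(m_X)_! ∘ λ_{TX} ∘ T λ_X ≤ λ_X ∘ m_{PX}`. -/
def LawE (M : TwoMonad Q) (lam : LamFamily M.toTwoFunctor) : Prop :=
  ∀ X : QCat Q,
    (pshf (M.mult X)).comp ((lam (M.obj X)).comp (M.map (lam X))) ≤ (lam X).comp (M.mult X.P)

def IsDistLawABC (T : TwoFunctor Q) (lam : LamFamily T) : Prop :=
  LawA T lam ∧ LawB T lam ∧ LawC T lam

/-- A (lax) distributive law of the 2-monad `M` over the presheaf 2-monad. -/
def IsDistLaw (M : TwoMonad Q) (lam : LamFamily M.toTwoFunctor) : Prop :=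
  IsDistLawABC M.toTwoFunctor lam ∧ LawD M lam ∧ LawE M lam

/-- A flat distributive law: (b) holds strictly. -/
def IsFlatDistLaw (M : TwoMonad Q) (lam : LamFamily M.toTwoFunctor) : Prop :=
  IsDistLaw M lam ∧ LawBstrict M.toTwoFunctor lam

/-- Lax `λ`-algebra: laws (f) and (g). -/
def IsLaxAlg (M : TwoMonad Q) (lam : LamFamily M.toTwoFunctor) (X : QCat Q)
    (p : QFun (M.obj X) X.P) : Prop :=
  X.y ≤ p.comp (M.unit X) ∧
  (supP X).comp ((pshf p).comp ((lam X).comp (M.map p))) ≤ p.comp (M.mult X)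

/-- Lax `λ`-homomorphism: law (h). -/
def IsLaxHom (M : TwoMonad Q) {X Y : QCat Q}
    (p : QFun (M.obj X) X.P) (q : QFun (M.obj Y) Y.P) (f : QFun X Y) : Prop :=
  (pshf f).comp p ≤ q.comp (M.map f)

/-- The type of families `T̂φ : TX ⇸ TY`, one for each `φ : X ⇸ Y`. -/
abbrev ExtFamily (T : TwoFunctor Q) : Type (u + 1) :=
  ∀ ⦃X Y : QCat Q⦄, QDist X Y → QDist (T.obj X) (T.obj Y)

/-- A lax extension of the 2-functor `T` to `Q`-Dist: conditions (1), (2), (3). -/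
def IsLaxExt (T : TwoFunctor Q) (ext : ExtFamily T) : Prop :=
  (∀ (X Y : QCat Q) (φ φ' : QDist X Y), φ ≤ φ' → ext φ ≤ ext φ') ∧
  (∀ (X Y Z : QCat Q) (φ : QDist X Y) (ψ : QDist Y Z), (ext ψ).comp (ext φ) ≤ ext (ψ.comp φ)) ∧
  (∀ (X Y : QCat Q) (f : QFun X Y),
    (T.map f).graph ≤ ext f.graph ∧ (T.map f).cograph ≤ ext f.cograph)

/-- Condition (4): `φ ∘ e_X^* ≤ e_Y^* ∘ T̂φ`. -/
def ExtLaw4 (M : TwoMonad Q) (ext : ExtFamily M.toTwoFunctor) : Prop :=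
  ∀ (X Y : QCat Q) (φ : QDist X Y),
    φ.comp (M.unit X).cograph ≤ ((M.unit Y).cograph).comp (ext φ)

/-- Condition (5): `T̂T̂φ ∘ m_X^* ≤ m_Y^* ∘ T̂φ`. -/
def ExtLaw5 (M : TwoMonad Q) (ext : ExtFamily M.toTwoFunctor) : Prop :=
  ∀ (X Y : QCat Q) (φ : QDist X Y),
    (ext (ext φ)).comp (M.mult X).cograph ≤ ((M.mult Y).cograph).comp (ext φ)

/-- A lax extension of the 2-monad `M` to `Q`-Dist. -/
def IsMonadLaxExt (M : TwoMonad Q) (ext : ExtFamily M.toTwoFunctor) : Prop :=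
  IsLaxExt M.toTwoFunctor ext ∧ ExtLaw4 M ext ∧ ExtLaw5 M ext

/-- Flatness of a lax extension: `T̂ 1_X^* = 1_{TX}^*`. -/
def FlatExt (T : TwoFunctor Q) (ext : ExtFamily T) : Prop :=
  ∀ X : QCat Q, ext X.homDist = (T.obj X).homDist

/-- From a lax distributive law to a lax extension: `←(T̂φ) = λ_X ∘ T(←φ)`. -/
def PhiExt (T : TwoFunctor Q) (lam : LamFamily T) : ExtFamily T :=
  fun X Y φ => QFun.untranspose ((lam X).comp (T.map φ.transpose))

/-- From a lax extension to a lax distributive law: `λ_X = ←(T̂((y_X)_*))`. -/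
def PsiLam (T : TwoFunctor Q) (ext : ExtFamily T) : LamFamily T :=
  fun X => (ext X.y.graph).transpose

/-- The canonical lax extension `T̂φ = (T ←φ)^* ∘ (T y_X)_*`. -/
def hatExt (T : TwoFunctor Q) : ExtFamily T :=
  fun X Y φ => ((T.map φ.transpose).cograph).comp (T.map X.y).graph

/-- `λ_X = y_{PX} ∘ sup_{PX}`: the flat distributive law of `P` over itself. -/
def lamP (X : QCat Q) : QFun X.P.P X.P.P := (QCat.y X.P).comp (supP X)

/-- `λ†_X = ((y_X)_†)^! ∘ y_{P†PX}`: the strict distributive law of `P†` over `P`. -/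
def lamd (X : QCat Q) : QFun X.P.Pd X.Pd.P := (pshb (cpsf X.y)).comp (QCat.y X.P.Pd)

/-- `Λ_X = y_{PP†X} ∘ ((y_X)_†)^!`: the flat distributive law of `P P†` over `P`. -/
def LamPPd (X : QCat Q) : QFun X.P.Pd.P X.Pd.P.P := (QCat.y X.Pd.P).comp (pshb (cpsf X.y))

/-- The multiplication `S_X = s_{P†X} ∘ (y†_{PP†X})^!` of the double presheaf 2-monad. -/
def Smult (X : QCat Q) : QFun X.Pd.P.Pd.P X.Pd.P := (supP X.Pd).comp (pshb (QCat.yd X.Pd.P))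

/-- `Λ†_X = (y_X^!)^{†!} ∘ y_{P†PPX}`: the flat distributive law of `P† P` over `P`. -/
def LamPdP (X : QCat Q) : QFun X.P.P.Pd X.P.Pd.P :=
  (pshf (cpsf (supP X))).comp (QCat.y X.P.P.Pd)

/-- The multiplication `S†_X = s†_{PX} ∘ (y_{P†PX})^†` of the double copresheaf
2-monad. -/
def Sdmult (X : QCat Q) : QFun X.P.Pd.P.Pd X.P.Pd := (infPd X.P).comp (cpsb (QCat.y X.P.Pd))

/-- Pointwise infimum of a family of `Q`-functors into a presheaf `Q`-category. -/
def QFun.iInfP {ι : Type u} {Z X : QCat Q} (F : ι → QFun Z X.P) : QFun Z X.P where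
  app s z := ⟨fun p x => ⨅ i, ((F i).app s z).1 p x, by
    intro p q x x'
    refine le_iInf fun i => ?_
    exact le_trans
      (Quantaloid.comp_le_comp (iInf_le (fun i => ((F i).app s z).1 q x') i) le_rfl)
      (((F i).app s z).2 p q x x')⟩
  mono := by
    intro s s' z z'
    refine le_iInf fun p => le_iInf fun x => Quantaloid.le_lda.mp ?_
    refine le_iInf fun i => ?_
    have h1 : Q.comp (Z.hom s s' z z') (⨅ j, ((F j).app s z).1 p x)
        ≤ Q.comp (Z.hom s s' z z') (((F i).app s z).1 p x) :=
      Quantaloid.comp_le_comp le_rfl (iInf_le _ i)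
    have h2 : Q.comp (Z.hom s s' z z') (((F i).app s z).1 p x)
        ≤ ((F i).app s' z').1 p x :=
      Quantaloid.le_lda.mpr
        (le_trans ((F i).mono s s' z z') (le_trans (iInf_le _ p) (iInf_le _ x)))
    exact le_trans h1 h2

/-! ### Auxiliary lemmas for Statement 5 -/

section Aux

theorem qfun_ext {X Y : QCat Q} {f g : QFun X Y} (hfg : f.app = g.app) : f = g := by
  cases f; cases g; cases hfg; rfl

theorem qfun_ext' {X Y : QCat Q} {f g : QFun X Y}
    (hfg : ∀ p (x : X.el p), f.app p x = g.app p x) : f = g :=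
  qfun_ext (funext fun p => funext fun x => hfg p x)

theorem app_congr {X Y : QCat Q} {f g : QFun X Y} (hfg : f = g) (p : Q.Obj) (x : X.el p) :
    f.app p x = g.app p x := by rw [hfg]

theorem idm_le_lda {a b : Q.Obj} {u w : Q.Hom a b} :
    Q.idm b ≤ Quantaloid.lda w u ↔ u ≤ w := by
  constructor
  · intro hh
    have h2 := Quantaloid.le_lda.mpr hh
    rwa [Q.idm_comp] at h2
  · intro hh
    exact Quantaloid.le_lda.mp (by rwa [Q.idm_comp])

theorem presheaf_le_iff {X : QCat Q} {s : Q.Obj} {σ σ' : X.P.el s} :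
    Q.idm s ≤ X.P.hom s s σ σ' ↔ ∀ p (x : X.el p), σ.1 p x ≤ σ'.1 p x := by
  show Q.idm s ≤ ⨅ p, ⨅ x : X.el p, Quantaloid.lda (σ'.1 p x) (σ.1 p x) ↔ _
  rw [le_iInf_iff]
  exact forall_congr' fun p => by rw [le_iInf_iff]; exact forall_congr' fun x => idm_le_lda

theorem qfun_le_iff {Z X : QCat Q} {F G : QFun Z X.P} :
    F ≤ G ↔ ∀ s (z : Z.el s) p (x : X.el p), (F.app s z).1 p x ≤ (G.app s z).1 p x := by
  constructor
  · intro hh s z p x; exact (presheaf_le_iff.mp (hh s z)) p x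
  · intro hh s z; exact presheaf_le_iff.mpr fun p x => hh s z p x

/-- The Yoneda lemma. -/
theorem yoneda {X : QCat Q} {p s : Q.Obj} (x : X.el p) (σ : X.P.el s) :
    X.P.hom p s (X.y.app p x) σ = σ.1 p x := by
  apply le_antisymm
  · have h1 : X.P.hom p s (X.y.app p x) σ ≤ Quantaloid.lda (σ.1 p x) (X.hom p p x x) :=
      le_trans (iInf_le _ p) (iInf_le _ x)
    have h2 := Quantaloid.le_lda.mpr h1
    calc X.P.hom p s (X.y.app p x) σ
        = Q.comp (X.P.hom p s (X.y.app p x) σ) (Q.idm p) := (Q.comp_idm _).symm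
      _ ≤ Q.comp (X.P.hom p s (X.y.app p x) σ) (X.hom p p x x) :=
          Quantaloid.comp_le_comp le_rfl (X.refl p x)
      _ ≤ σ.1 p x := h2
  · refine le_iInf fun q => le_iInf fun x' => Quantaloid.le_lda.mp ?_
    exact σ.2 q p x' x

theorem hom_comp_eval {X : QCat Q} {p q s : Q.Obj} (x : X.el p) (σ : X.P.el q)
    (σ' : X.P.el s) : Q.comp (X.P.hom q s σ σ') (σ.1 p x) ≤ σ'.1 p x :=
  Quantaloid.le_lda.mpr (le_trans (iInf_le _ p) (iInf_le _ x))

theorem hom_le_of_idm_le {X : QCat Q} {p q : Q.Obj} {a : X.el p} {b c : X.el q}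
    (hh : Q.idm q ≤ X.hom q q b c) : X.hom p q a b ≤ X.hom p q a c :=
  calc X.hom p q a b = Q.comp (Q.idm q) (X.hom p q a b) := (Q.idm_comp _).symm
    _ ≤ Q.comp (X.hom q q b c) (X.hom p q a b) := Quantaloid.comp_le_comp hh le_rfl
    _ ≤ X.hom p q a c := X.hom_comp_le a b c

/-- Naturality of the Yoneda embedding: `f_! ∘ y_X = y_Y ∘ f`. -/
theorem pshf_comp_y {X Y : QCat Q} (f : QFun X Y) :
    (pshf f).comp X.y = (QCat.y Y).comp f := by
  refine qfun_ext' fun s x => Subtype.ext (funext fun q => funext fun y' => le_antisymm ?_ ?_)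
  · refine iSup₂_le fun p x' => ?_
    calc Q.comp (X.hom p s x' x) (Y.hom q p y' (f.app p x'))
        ≤ Q.comp (Y.hom p s (f.app p x') (f.app s x)) (Y.hom q p y' (f.app p x')) :=
          Quantaloid.comp_le_comp (f.mono p s x' x) le_rfl
      _ ≤ Y.hom q s y' (f.app s x) := Y.hom_comp_le _ _ _
  · refine le_iSup_of_le s (le_iSup_of_le x ?_)
    calc Y.hom q s y' (f.app s x)
        = Q.comp (Q.idm s) (Y.hom q s y' (f.app s x)) := (Q.idm_comp _).symm
      _ ≤ Q.comp (X.hom s s x x) (Y.hom q s y' (f.app s x)) :=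
          Quantaloid.comp_le_comp (X.refl s x) le_rfl

theorem supP_comp_y (X : QCat Q) : (supP X).comp (QCat.y X.P) = QFun.id X.P := by
  refine qfun_ext' fun s σ => Subtype.ext (funext fun p => funext fun x => le_antisymm ?_ ?_)
  · refine iSup₂_le fun q σ' => ?_
    have h1 : X.P.hom p q (X.y.app p x) σ' = σ'.1 p x := yoneda x σ'
    show Q.comp (X.P.hom q s σ' σ) (X.P.hom p q (X.y.app p x) σ') ≤ σ.1 p x
    rw [h1]
    exact hom_comp_eval x σ' σ
  · refine le_iSup_of_le s (le_iSup_of_le σ ?_)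
    show σ.1 p x ≤ Q.comp (X.P.hom s s σ σ) (X.P.hom p s (X.y.app p x) σ)
    rw [yoneda x σ]
    calc σ.1 p x = Q.comp (Q.idm s) (σ.1 p x) := (Q.idm_comp _).symm
      _ ≤ Q.comp (X.P.hom s s σ σ) (σ.1 p x) :=
          Quantaloid.comp_le_comp (X.P.refl s σ) le_rfl

theorem pshf_y_le (X : QCat Q) : pshf X.y ≤ QCat.y X.P := by
  rw [qfun_le_iff]
  intro s σ q σ'
  refine iSup₂_le fun p x => ?_
  show Q.comp (σ.1 p x) (X.P.hom q p σ' (X.y.app p x)) ≤ X.P.hom q s σ' σ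
  rw [← yoneda x σ]
  exact X.P.hom_comp_le σ' (X.y.app p x) σ

end Aux

section Laws

variable (M : TwoMonad Q)

/-- The canonical candidate `λ_X = ←((T y_X)_*)`. -/
private def lam0 : LamFamily M.toTwoFunctor := fun X => ((M.map X.y).graph).transpose

theorem lam0_val (X : QCat Q) {s p : Q.Obj} (SS : (M.obj X.P).el s) (t : (M.obj X).el p) :
    ((lam0 M X).app s SS).1 p t = (M.obj X.P).hom p s ((M.map X.y).app p t) SS := rfl

theorem lawB0 (h : ∀ X : QCat Q, (M.map X.y).FullyFaithful) :
    LawBstrict M.toTwoFunctor (lam0 M) := by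
  intro X
  refine qfun_ext' fun p t => Subtype.ext (funext fun q => funext fun t' => ?_)
  exact (h X q p t' t).symm

theorem lawA0 : LawA M.toTwoFunctor (lam0 M) := by
  intro X Y f
  rw [qfun_le_iff]
  intro s SS p t'
  refine iSup₂_le fun q t => ?_
  have h2 : (M.map Y.y).app q ((M.map f).app q t)
      = (M.map (pshf f)).app q ((M.map X.y).app q t) := by
    have hc : (M.map Y.y).comp (M.map f) = (M.map (pshf f)).comp (M.map X.y) := by
      rw [← M.map_comp, ← M.map_comp, pshf_comp_y]
    exact app_congr hc q t
  have h1 : (M.obj Y).hom p q t' ((M.map f).app q t)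
      ≤ (M.obj Y.P).hom p q ((M.map Y.y).app p t')
          ((M.map (pshf f)).app q ((M.map X.y).app q t)) := by
    rw [← h2]; exact (M.map Y.y).mono p q _ _
  have h3 : (M.obj X.P).hom q s ((M.map X.y).app q t) SS
      ≤ (M.obj Y.P).hom q s ((M.map (pshf f)).app q ((M.map X.y).app q t))
          ((M.map (pshf f)).app s SS) :=
    (M.map (pshf f)).mono q s _ _
  exact le_trans (Quantaloid.comp_le_comp h3 h1) ((M.obj Y.P).hom_comp_le _ _ _)

theorem lawC0 : LawC M.toTwoFunctor (lam0 M) := by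
  intro X
  rw [qfun_le_iff]
  intro s Θ p t
  refine iSup₂_le fun r ρ => ?_
  show Q.comp (⨆ q, ⨆ SS' : (M.obj X.P).el q,
      Q.comp ((M.obj X.P.P).hom q s ((M.map (QCat.y X.P)).app q SS') Θ)
        (((M.obj X).P).hom r q ρ ((lam0 M X).app q SS')))
      (((M.obj X).P).hom p r ((QCat.y (M.obj X)).app p t) ρ)
    ≤ (M.obj X.P).hom p s ((M.map X.y).app p t) ((M.map (supP X)).app s Θ)
  rw [Quantaloid.iSup_comp]
  refine iSup_le fun q => ?_
  rw [Quantaloid.iSup_comp]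
  refine iSup_le fun SS' => ?_
  rw [Q.comp_assoc]
  have h1 : Q.comp (((M.obj X).P).hom r q ρ ((lam0 M X).app q SS'))
      (((M.obj X).P).hom p r ((QCat.y (M.obj X)).app p t) ρ)
      ≤ (M.obj X.P).hom p q ((M.map X.y).app p t) SS' := by
    refine le_trans (((M.obj X).P).hom_comp_le _ _ _) ?_
    rw [yoneda t ((lam0 M X).app q SS')]
    exact le_rfl
  have h2 : (M.obj X.P.P).hom q s ((M.map (QCat.y X.P)).app q SS') Θ
      ≤ (M.obj X.P).hom q s SS' ((M.map (supP X)).app s Θ) := by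
    have h4 : (M.map (supP X)).app q ((M.map (QCat.y X.P)).app q SS') = SS' := by
      have hc : (M.map (supP X)).comp (M.map (QCat.y X.P)) = QFun.id (M.obj X.P) := by
        rw [← M.map_comp, supP_comp_y, M.map_id]
      exact app_congr hc q SS'
    have := (M.map (supP X)).mono q s ((M.map (QCat.y X.P)).app q SS') Θ
    rwa [h4] at this
  exact le_trans (Quantaloid.comp_le_comp h2 h1) ((M.obj X.P).hom_comp_le _ _ _)

theorem lawD0 : LawD M (lam0 M) := by
  intro X
  rw [qfun_le_iff]
  intro s σ p t
  refine iSup₂_le fun q x => ?_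
  have h1 : σ.1 q x ≤ (M.obj X.P).hom q s ((M.map X.y).app q ((M.unit X).app q x))
      ((M.unit X.P).app s σ) := by
    have h2 : (M.unit X.P).app q (X.y.app q x) = (M.map X.y).app q ((M.unit X).app q x) :=
      app_congr (M.unit_nat X.y) q x
    rw [← h2, ← yoneda x σ]
    exact (M.unit X.P).mono q s (X.y.app q x) σ
  have h3 : (M.obj X).hom p q t ((M.unit X).app q x)
      ≤ (M.obj X.P).hom p q ((M.map X.y).app p t)
          ((M.map X.y).app q ((M.unit X).app q x)) :=
    (M.map X.y).mono p q _ _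
  exact le_trans (Quantaloid.comp_le_comp h1 h3) ((M.obj X.P).hom_comp_le _ _ _)

theorem pshf_comp_lam0_le (h : ∀ X : QCat Q, (M.map X.y).FullyFaithful) (X : QCat Q) :
    (pshf (M.map X.y)).comp (lam0 M X) ≤ QCat.y (M.obj X.P) := by
  rw [qfun_le_iff]
  intro s SS q SS'
  refine iSup₂_le fun p t => ?_
  show Q.comp ((M.obj X.P).hom p s ((M.map X.y).app p t) SS)
      ((M.obj X.P).hom q p SS' ((M.map X.y).app p t)) ≤ (M.obj X.P).hom q s SS' SS
  exact (M.obj X.P).hom_comp_le _ _ _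

theorem lawE0 (h : ∀ X : QCat Q, (M.map X.y).FullyFaithful) : LawE M (lam0 M) := by
  intro X
  rw [qfun_le_iff]
  intro s Ξ p t
  refine iSup₂_le fun q w => ?_
  set G := M.map (pshf (M.map X.y)) with hG
  -- step 1: apply G, use pshf_comp_y to rewrite the first argument
  have h2 : G.app q ((M.map (QCat.y (M.obj X))).app q w)
      = (M.map (QCat.y (M.obj X.P))).app q ((M.map (M.map X.y)).app q w) := by
    have hc : G.comp (M.map (QCat.y (M.obj X)))
        = (M.map (QCat.y (M.obj X.P))).comp (M.map (M.map X.y)) := by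
      rw [hG, ← M.map_comp, ← M.map_comp, pshf_comp_y]
    exact app_congr hc q w
  have h1 : (M.obj ((M.obj X).P)).hom q s ((M.map (QCat.y (M.obj X))).app q w)
        ((M.map (lam0 M X)).app s Ξ)
      ≤ (M.obj ((M.obj X.P).P)).hom q s
        ((M.map (QCat.y (M.obj X.P))).app q ((M.map (M.map X.y)).app q w))
        (G.app s ((M.map (lam0 M X)).app s Ξ)) := by
    rw [← h2]; exact G.mono q s _ _
  -- step 2: G ∘ T(lam0) ≤ T(y_{TPX})
  have h3 : Q.idm s ≤ (M.obj ((M.obj X.P).P)).hom s s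
      (G.app s ((M.map (lam0 M X)).app s Ξ))
      ((M.map (QCat.y (M.obj X.P))).app s Ξ) := by
    have h4 : (G.comp (M.map (lam0 M X))) ≤ M.map (QCat.y (M.obj X.P)) := by
      rw [hG, ← M.map_comp]
      exact M.map_mono (pshf_comp_lam0_le M h X)
    exact h4 s Ξ
  have h5 : (M.obj ((M.obj X).P)).hom q s ((M.map (QCat.y (M.obj X))).app q w)
        ((M.map (lam0 M X)).app s Ξ)
      ≤ (M.obj ((M.obj X.P).P)).hom q s
        ((M.map (QCat.y (M.obj X.P))).app q ((M.map (M.map X.y)).app q w))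
        ((M.map (QCat.y (M.obj X.P))).app s Ξ) :=
    le_trans h1 (hom_le_of_idm_le h3)
  -- step 3: fully faithfulness of T y_{TPX}
  rw [← h (M.obj X.P) q s ((M.map (M.map X.y)).app q w) Ξ] at h5
  -- step 4: apply m_{PX} and naturality of m
  have h6 : (M.obj (M.obj X.P)).hom q s ((M.map (M.map X.y)).app q w) Ξ
      ≤ (M.obj X.P).hom q s ((M.map X.y).app q ((M.mult X).app q w))
          ((M.mult X.P).app s Ξ) := by
    have h7 : (M.mult X.P).app q ((M.map (M.map X.y)).app q w)
        = (M.map X.y).app q ((M.mult X).app q w) :=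
      app_congr (M.mult_nat X.y) q w
    have h8 := (M.mult X.P).mono q s ((M.map (M.map X.y)).app q w) Ξ
    rwa [h7] at h8
  have h9 : (M.obj X).hom p q t ((M.mult X).app q w)
      ≤ (M.obj X.P).hom p q ((M.map X.y).app p t)
          ((M.map X.y).app q ((M.mult X).app q w)) :=
    (M.map X.y).mono p q _ _
  exact le_trans (Quantaloid.comp_le_comp (le_trans h5 h6) h9)
    ((M.obj X.P).hom_comp_le _ _ _)

theorem lawB0_lax (h : ∀ X : QCat Q, (M.map X.y).FullyFaithful) :
    LawB M.toTwoFunctor (lam0 M) := by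
  intro X
  rw [lawB0 M h X]

theorem unique0 (h : ∀ X : QCat Q, (M.map X.y).FullyFaithful)
    (lam : LamFamily M.toTwoFunctor) (hlam : IsFlatDistLaw M lam) : lam = lam0 M := by
  obtain ⟨⟨⟨hA, _, _⟩, _, _⟩, hBs⟩ := hlam
  funext X
  refine qfun_ext' fun s SS => Subtype.ext (funext fun p => funext fun t =>
    le_antisymm ?_ ?_)
  · -- lam SS (t) ≤ TPX.hom (Ty t) SS
    have hA' := qfun_le_iff.mp (hA X X.P X.y) s SS p ((M.map X.y).app p t)
    have hstep1 : ((lam X).app s SS).1 p t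
        ≤ (((pshf (M.map X.y)).comp (lam X)).app s SS).1 p ((M.map X.y).app p t) := by
      refine le_trans ?_ (le_iSup_of_le p (le_iSup_of_le t le_rfl))
      calc ((lam X).app s SS).1 p t
          = Q.comp (((lam X).app s SS).1 p t) (Q.idm p) := (Q.comp_idm _).symm
        _ ≤ Q.comp (((lam X).app s SS).1 p t)
            ((M.obj X.P).hom p p ((M.map X.y).app p t) ((M.map X.y).app p t)) :=
            Quantaloid.comp_le_comp le_rfl ((M.obj X.P).refl p _)
    have hstep2 : (((lam X.P).comp (M.map (pshf X.y))).app s SS).1 p ((M.map X.y).app p t)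
        ≤ (M.obj X.P).hom p s ((M.map X.y).app p t) SS := by
      have hmono : M.map (pshf X.y) ≤ M.map (QCat.y X.P) := M.map_mono (pshf_y_le X)
      have hm := le_trans (hmono s SS)
        ((lam X.P).mono s s ((M.map (pshf X.y)).app s SS) ((M.map (QCat.y X.P)).app s SS))
      have heq : (lam X.P).app s ((M.map (QCat.y X.P)).app s SS)
          = (QCat.y (M.obj X.P)).app s SS := app_congr (hBs X.P) s SS
      rw [heq] at hm
      exact presheaf_le_iff.mp hm p ((M.map X.y).app p t)
    exact le_trans hstep1 (le_trans hA' hstep2)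
  · -- TPX.hom (Ty t) SS ≤ lam SS (t)
    have h1 := (lam X).mono p s ((M.map X.y).app p t) SS
    have h2 : (lam X).app p ((M.map X.y).app p t) = (QCat.y (M.obj X)).app p t :=
      app_congr (hBs X) p t
    rw [h2] at h1
    exact le_trans h1 (le_of_eq (yoneda t ((lam X).app s SS)))

end Laws

/-- if `T y_X : TX → TPX` is fully faithful for every `Q`-category `X`,
then `λ_X = ←((T y_X)_*)` defines a flat distributive law of the 2-monad `𝕋` over the
presheaf 2-monad, and it is the only one. -/
theorem statement5 (Q : Quantaloid.{u}) (M : TwoMonad Q)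
    (h : ∀ X : QCat Q, (M.map X.y).FullyFaithful) :
    IsFlatDistLaw M (fun X => ((M.map X.y).graph).transpose) ∧
    (∀ lam : LamFamily M.toTwoFunctor, IsFlatDistLaw M lam →
      lam = fun X => ((M.map X.y).graph).transpose) := by
  exact ⟨⟨⟨⟨lawA0 M, lawB0_lax M h, lawC0 M⟩, lawD0 M, lawE0 M h⟩, lawB0 M h⟩,
    fun lam hlam => unique0 M h lam hlam⟩

end QT
end

section
/- The copresheaf 2-monad 𝔓† = (P†,s†,y†) on Q-Cat distributes strictly over the presheaf 2-monad 𝔓 by the distributive law λ† given by λ†_X = ←(((y_X)_†)_*) = ((y_X)_†)^!·y_{P†PX}:P†PX→PP†X; that is, this λ† satisfies all five distributive-law laws (a)–(e) with equality. -/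
/-!
Common framework: quantaloids, `Q`-categories, `Q`-functors, `Q`-distributors,
(co)presheaf constructions, 2-monads on `Q`-Cat, lax distributive laws over the
presheaf 2-monad, and lax extensions to `Q`-Dist.
-/

set_option autoImplicit false

universe u

namespace QT

variable {Q : Quantaloid.{u}}

section Statement8Aux

open Quantaloid

/-- Extensionality for `Q`-functors. -/
lemma QFun.ext'' {Z W : QCat Q} {f g : QFun Z W} (h : f.app = g.app) : f = g := by
  cases f; cases g; cases h; rfl

/-- Extensionality for `Q`-functors into a presheaf `Q`-category, valuewise. -/
lemma QFunP_ext {Z W : QCat Q} {f g : QFun Z W.P}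
    (h : ∀ s (z : Z.el s) p (x : W.el p), (f.app s z).1 p x = (g.app s z).1 p x) : f = g :=
  QFun.ext'' (funext fun s => funext fun z =>
    Subtype.ext (funext fun p => funext fun x => h s z p x))

lemma le_comp_homrefl_left {Z : QCat Q} {a s : Q.Obj} (z : Z.el s) (u : Q.Hom a s) :
    u ≤ Q.comp (Z.hom s s z z) u := by
  calc u = Q.comp (Q.idm s) u := (Q.idm_comp u).symm
    _ ≤ _ := Quantaloid.comp_le_comp (Z.refl s z) le_rfl

lemma le_comp_homrefl_right {Z : QCat Q} {s b : Q.Obj} (z : Z.el s) (u : Q.Hom s b) :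
    u ≤ Q.comp u (Z.hom s s z z) := by
  calc u = Q.comp u (Q.idm s) := (Q.comp_idm u).symm
    _ ≤ _ := Quantaloid.comp_le_comp le_rfl (Z.refl s z)

lemma le_Phom {Z : QCat Q} {s s' : Q.Obj} {σ : Z.P.el s} {σ' : Z.P.el s'} {u : Q.Hom s s'} :
    u ≤ Z.P.hom s s' σ σ' ↔ ∀ p (x : Z.el p), Q.comp u (σ.1 p x) ≤ σ'.1 p x := by
  constructor
  · intro h p x
    exact Quantaloid.le_lda.mpr (le_trans h (le_trans (iInf_le _ p) (iInf_le _ x)))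
  · intro h
    exact le_iInf fun p => le_iInf fun x => Quantaloid.le_lda.mp (h p x)

lemma le_Pdhom {Z : QCat Q} {s s' : Q.Obj} {τ : Z.Pd.el s} {τ' : Z.Pd.el s'} {u : Q.Hom s s'} :
    u ≤ Z.Pd.hom s s' τ τ' ↔ ∀ q (x : Z.el q), Q.comp (τ'.1 q x) u ≤ τ.1 q x := by
  constructor
  · intro h q x
    exact Quantaloid.le_rda.mpr (le_trans h (le_trans (iInf_le _ q) (iInf_le _ x)))
  · intro h
    exact le_iInf fun q => le_iInf fun x => Quantaloid.le_rda.mp (h q x)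

lemma Phom_app {Z : QCat Q} {s s' p : Q.Obj} (σ : Z.P.el s) (σ' : Z.P.el s') (x : Z.el p) :
    Q.comp (Z.P.hom s s' σ σ') (σ.1 p x) ≤ σ'.1 p x := le_Phom.mp le_rfl p x

lemma Pdhom_app {Z : QCat Q} {s s' q : Q.Obj} (τ : Z.Pd.el s) (τ' : Z.Pd.el s') (x : Z.el q) :
    Q.comp (τ'.1 q x) (Z.Pd.hom s s' τ τ') ≤ τ.1 q x := le_Pdhom.mp le_rfl q x

lemma idm_le_Pdhom {Z : QCat Q} {s : Q.Obj} {τ τ' : Z.Pd.el s}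
    (h : ∀ q (x : Z.el q), τ'.1 q x ≤ τ.1 q x) : Q.idm s ≤ Z.Pd.hom s s τ τ' :=
  le_Pdhom.mpr fun q x => le_trans (le_of_eq (Q.comp_idm _)) (h q x)

/-- Yoneda lemma. -/
lemma Phom_y {Z : QCat Q} {p q : Q.Obj} (x : Z.el p) (σ : Z.P.el q) :
    Z.P.hom p q (Z.y.app p x) σ = σ.1 p x := by
  apply le_antisymm
  · exact le_trans (le_comp_homrefl_right (Z := Z) x _) (Phom_app (Z.y.app p x) σ x)
  · exact le_Phom.mpr fun p' x' => σ.2 p' p x' x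

/-- Co-Yoneda lemma. -/
lemma Pdhom_yd {Z : QCat Q} {s p : Q.Obj} (τ : Z.Pd.el s) (x : Z.el p) :
    Z.Pd.hom s p τ (Z.yd.app p x) = τ.1 p x := by
  apply le_antisymm
  · exact le_trans (le_comp_homrefl_left (Z := Z) x _) (Pdhom_app τ (Z.yd.app p x) x)
  · exact le_Pdhom.mpr fun q x' => τ.2 p q x x'

/-- Pairing of a copresheaf with a presheaf. -/
def pairD {Z : QCat Q} {p q : Q.Obj} (δ : Z.Pd.el p) (σ : Z.P.el q) : Q.Hom p q :=
  ⨆ r, ⨆ x : Z.el r, Q.comp (σ.1 r x) (δ.1 r x)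

lemma le_pairD {Z : QCat Q} {p q r : Q.Obj} (δ : Z.Pd.el p) (σ : Z.P.el q) (x : Z.el r) :
    Q.comp (σ.1 r x) (δ.1 r x) ≤ pairD δ σ := le_iSup_of_le r (le_iSup_of_le x le_rfl)

lemma pair_y {Z : QCat Q} {p q : Q.Obj} (δ : Z.Pd.el p) (x : Z.el q) :
    pairD δ (Z.y.app q x) = δ.1 q x := by
  apply le_antisymm
  · exact iSup₂_le fun r x' => δ.2 r q x' x
  · exact le_trans (le_comp_homrefl_left (Z := Z) x _) (le_pairD δ (Z.y.app q x) x)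

lemma pair_yd {Z : QCat Q} {p q : Q.Obj} (x : Z.el p) (σ : Z.P.el q) :
    pairD (Z.yd.app p x) σ = σ.1 p x := by
  apply le_antisymm
  · exact iSup₂_le fun r x' => σ.2 p r x x'
  · exact le_trans (le_comp_homrefl_right (Z := Z) x _) (le_pairD (Z.yd.app p x) σ x)

lemma pair_hom_left {Z : QCat Q} {p' p q : Q.Obj} (δ' : Z.Pd.el p') (δ : Z.Pd.el p)
    (σ : Z.P.el q) : Q.comp (pairD δ σ) (Z.Pd.hom p' p δ' δ) ≤ pairD δ' σ := by
  simp only [pairD, Quantaloid.iSup_comp]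
  refine iSup_le fun r => iSup_le fun x => ?_
  rw [Q.comp_assoc]
  exact le_iSup_of_le r (le_iSup_of_le x (Quantaloid.comp_le_comp le_rfl (Pdhom_app δ' δ x)))

lemma pair_hom_right {Z : QCat Q} {p q q' : Q.Obj} (δ : Z.Pd.el p) (σ : Z.P.el q)
    (σ' : Z.P.el q') : Q.comp (Z.P.hom q q' σ σ') (pairD δ σ) ≤ pairD δ σ' := by
  simp only [pairD, Quantaloid.comp_iSup]
  refine iSup_le fun r => iSup_le fun x => ?_
  rw [← Q.comp_assoc]
  exact le_iSup_of_le r (le_iSup_of_le x (Quantaloid.comp_le_comp (Phom_app σ σ' x) le_rfl))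

lemma pshf_app {X Y : QCat Q} {s p : Q.Obj} (f : QFun X Y) (σ : X.P.el s) (y : Y.el p) :
    ((pshf f).app s σ).1 p y
      = ⨆ q, ⨆ x : X.el q, Q.comp (σ.1 q x) (Y.hom p q y (f.app q x)) := rfl

lemma cpsf_app {X Y : QCat Q} {s q : Q.Obj} (f : QFun X Y) (δ : X.Pd.el s) (y : Y.el q) :
    ((cpsf f).app s δ).1 q y
      = ⨆ r, ⨆ x : X.el r, Q.comp (Y.hom r q (f.app r x) y) (δ.1 r x) := rfl

lemma cpsb_app {X Y : QCat Q} {s r : Q.Obj} (f : QFun X Y) (ε : Y.Pd.el s) (x : X.el r) :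
    ((cpsb f).app s ε).1 r x = ε.1 r (f.app r x) := by
  apply le_antisymm
  · exact iSup₂_le fun a y => ε.2 a r y (f.app r x)
  · exact le_trans (le_comp_homrefl_left (Z := Y) (f.app r x) _)
      (le_iSup_of_le r (le_iSup_of_le (f.app r x) le_rfl))

lemma supP_app {Z : QCat Q} {s p : Q.Obj} (A : Z.P.P.el s) (x : Z.el p) :
    ((supP Z).app s A).1 p x = ⨆ r, ⨆ σ : Z.P.el r, Q.comp (A.1 r σ) (σ.1 p x) := by
  show (⨆ r, ⨆ σ : Z.P.el r, Q.comp (A.1 r σ) (Z.P.hom p r (Z.y.app p x) σ)) = _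
  exact iSup_congr fun r => iSup_congr fun σ => by rw [Phom_y]

lemma infPd_app {Z : QCat Q} {s q : Q.Obj} (W : Z.Pd.Pd.el s) (x : Z.el q) :
    ((infPd Z).app s W).1 q x = ⨆ r, ⨆ δ : Z.Pd.el r, Q.comp (δ.1 q x) (W.1 r δ) := by
  show (⨆ r, ⨆ δ : Z.Pd.el r, Q.comp (Z.Pd.hom r q δ (Z.yd.app q x)) (W.1 r δ)) = _
  exact iSup_congr fun r => iSup_congr fun δ => by rw [Pdhom_yd]

lemma cpsfy_app {Z : QCat Q} {p q : Q.Obj} (δ : Z.Pd.el p) (σ : Z.P.el q) :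
    ((cpsf Z.y).app p δ).1 q σ = pairD δ σ := by
  show (⨆ r, ⨆ x : Z.el r, Q.comp (Z.P.hom r q (Z.y.app r x) σ) (δ.1 r x)) = _
  exact iSup_congr fun r => iSup_congr fun x => by rw [Phom_y]

lemma lamd_app {Z : QCat Q} {s p : Q.Obj} (τ : Z.P.Pd.el s) (δ : Z.Pd.el p) :
    ((lamd Z).app s τ).1 p δ = Z.P.Pd.hom p s ((cpsf Z.y).app p δ) τ := by
  show (⨆ q, ⨆ μ : Z.P.Pd.el q, Q.comp (Z.P.Pd.hom q s μ τ)
      (Z.P.Pd.hom p q ((cpsf Z.y).app p δ) μ)) = _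
  apply le_antisymm
  · exact iSup₂_le fun q μ => Z.P.Pd.hom_comp_le ((cpsf Z.y).app p δ) μ τ
  · exact le_trans (le_comp_homrefl_right (Z := Z.P.Pd) ((cpsf Z.y).app p δ) _)
      (le_iSup_of_le p (le_iSup_of_le ((cpsf Z.y).app p δ) le_rfl))

lemma lamd_app' {Z : QCat Q} {s p : Q.Obj} (τ : Z.P.Pd.el s) (δ : Z.Pd.el p) :
    ((lamd Z).app s τ).1 p δ
      = ⨅ q, ⨅ σ : Z.P.el q, Quantaloid.rda (τ.1 q σ) (pairD δ σ) := by
  rw [lamd_app]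
  show (⨅ q, ⨅ σ : Z.P.el q, Quantaloid.rda (τ.1 q σ) (((cpsf Z.y).app p δ).1 q σ)) = _
  exact iInf_congr fun q => iInf_congr fun σ => by rw [cpsfy_app]

lemma le_lamd {Z : QCat Q} {s p : Q.Obj} {τ : Z.P.Pd.el s} {δ : Z.Pd.el p} {u : Q.Hom p s} :
    u ≤ ((lamd Z).app s τ).1 p δ
      ↔ ∀ q (σ : Z.P.el q), Q.comp (τ.1 q σ) u ≤ pairD δ σ := by
  rw [lamd_app']
  constructor
  · intro h q σ
    exact Quantaloid.le_rda.mpr (le_trans h (le_trans (iInf_le _ q) (iInf_le _ σ)))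
  · intro h
    exact le_iInf fun q => le_iInf fun σ => Quantaloid.le_rda.mp (h q σ)

lemma lamd_spec {Z : QCat Q} {s p : Q.Obj} (τ : Z.P.Pd.el s) (δ : Z.Pd.el p)
    (q : Q.Obj) (σ : Z.P.el q) :
    Q.comp (τ.1 q σ) (((lamd Z).app s τ).1 p δ) ≤ pairD δ σ := le_lamd.mp le_rfl q σ

lemma pshf_le {X Y : QCat Q} {s a : Q.Obj} (f : QFun X Y) (σ : X.P.el s) (x : X.el a) :
    σ.1 a x ≤ ((pshf f).app s σ).1 a (f.app a x) := by
  rw [pshf_app]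
  exact le_trans (le_comp_homrefl_right (Z := Y) (f.app a x) _)
    (le_iSup_of_le a (le_iSup_of_le x le_rfl))

lemma cpsf_le {X Y : QCat Q} {s a : Q.Obj} (f : QFun X Y) (δ : X.Pd.el s) (x : X.el a) :
    δ.1 a x ≤ ((cpsf f).app s δ).1 a (f.app a x) := by
  rw [cpsf_app]
  exact le_trans (le_comp_homrefl_left (Z := Y) (f.app a x) _)
    (le_iSup_of_le a (le_iSup_of_le x le_rfl))

lemma pair_pshf_le {X Y : QCat Q} {p q : Q.Obj} (f : QFun X Y) (ε : Y.Pd.el p)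
    (σ : X.P.el q) : pairD ε ((pshf f).app q σ) ≤ pairD ((cpsb f).app p ε) σ := by
  refine iSup₂_le fun a y => ?_
  rw [pshf_app, Quantaloid.iSup_comp]
  refine iSup_le fun b => ?_
  rw [Quantaloid.iSup_comp]
  refine iSup_le fun x => ?_
  rw [Q.comp_assoc]
  refine le_trans (Quantaloid.comp_le_comp le_rfl (ε.2 a b y (f.app b x))) ?_
  refine le_trans ?_ (le_pairD ((cpsb f).app p ε) σ x)
  rw [cpsb_app]

lemma pair_cpsf {X Y : QCat Q} {p q r : Q.Obj} (f : QFun X Y) (ε : Y.Pd.el p)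
    (δ : X.Pd.el q) (σ : X.P.el r) :
    Q.comp (pairD δ σ) (Y.Pd.hom p q ε ((cpsf f).app q δ))
      ≤ pairD ε ((pshf f).app r σ) := by
  simp only [pairD, Quantaloid.iSup_comp]
  refine iSup_le fun a => iSup_le fun x => ?_
  rw [Q.comp_assoc]
  have h1 : Q.comp (δ.1 a x) (Y.Pd.hom p q ε ((cpsf f).app q δ)) ≤ ε.1 a (f.app a x) :=
    le_trans (Quantaloid.comp_le_comp (cpsf_le f δ x) le_rfl)
      (Pdhom_app ε ((cpsf f).app q δ) (f.app a x))
  refine le_trans (Quantaloid.comp_le_comp le_rfl h1) ?_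
  exact le_trans (Quantaloid.comp_le_comp (pshf_le f σ x) le_rfl)
    (le_iSup_of_le a (le_iSup_of_le (f.app a x) le_rfl))

lemma pair_supP {Z : QCat Q} {p r : Q.Obj} (δ : Z.Pd.el p) (A : Z.P.P.el r) :
    pairD δ ((supP Z).app r A)
      = ⨆ a, ⨆ σ : Z.P.el a, Q.comp (A.1 a σ) (pairD δ σ) := by
  apply le_antisymm
  · refine iSup₂_le fun b x => ?_
    rw [supP_app, Quantaloid.iSup_comp]
    refine iSup_le fun a => ?_
    rw [Quantaloid.iSup_comp]
    refine iSup_le fun σ => ?_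
    rw [Q.comp_assoc]
    exact le_iSup_of_le a (le_iSup_of_le σ (Quantaloid.comp_le_comp le_rfl (le_pairD δ σ x)))
  · refine iSup₂_le fun a σ => ?_
    simp only [pairD, Quantaloid.comp_iSup]
    refine iSup_le fun b => iSup_le fun x => ?_
    rw [← Q.comp_assoc]
    refine le_iSup_of_le b (le_iSup_of_le x (Quantaloid.comp_le_comp ?_ le_rfl))
    rw [supP_app]
    exact le_iSup_of_le a (le_iSup_of_le σ le_rfl)

lemma pair_supP' {Z : QCat Q} {p r : Q.Obj} (δ : Z.Pd.el p) (A : Z.P.P.el r) :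
    pairD δ ((supP Z).app r A) = pairD ((cpsf Z.y).app p δ) A := by
  rw [pair_supP]
  exact iSup_congr fun a => iSup_congr fun σ => by rw [cpsfy_app]

lemma idm_le_lamd {Z : QCat Q} {p : Q.Obj} (δ : Z.Pd.el p) :
    Q.idm p ≤ ((lamd Z).app p ((cpsf Z.y).app p δ)).1 p δ :=
  le_lamd.mpr fun q σ => by rw [cpsfy_app, Q.comp_idm]

lemma supP_pshf {Z W : QCat Q} (g : QFun Z W.P) {s p : Q.Obj} (A : Z.P.el s) (x : W.el p) :
    ((supP W).app s ((pshf g).app s A)).1 p x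
      = ⨆ r, ⨆ z : Z.el r, Q.comp (A.1 r z) ((g.app r z).1 p x) := by
  rw [supP_app]
  apply le_antisymm
  · refine iSup_le fun q => iSup_le fun ρ => ?_
    rw [pshf_app, Quantaloid.iSup_comp]
    refine iSup_le fun r => ?_
    rw [Quantaloid.iSup_comp]
    refine iSup_le fun z => ?_
    rw [Q.comp_assoc]
    exact le_iSup_of_le r (le_iSup_of_le z
      (Quantaloid.comp_le_comp le_rfl (Phom_app ρ (g.app r z) x)))
  · refine iSup_le fun r => iSup_le fun z => ?_
    refine le_iSup_of_le r (le_iSup_of_le (g.app r z) ?_)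
    exact Quantaloid.comp_le_comp (pshf_le g A z) le_rfl

end Statement8Aux

/-- the copresheaf 2-monad `𝔓† = (P†, s†, y†)` distributes strictly over
the presheaf 2-monad by `λ†_X = ←(((y_X)_†)_*) = ((y_X)_†)^! ∘ y_{P†PX} : P†PX → PP†X`
(here `T = P†`, `Tf = f_†`, `e = y†`, `m = s†`): all five laws (a)–(e) hold with
equality. -/
theorem statement8 (Q : Quantaloid.{u}) :
    -- the two descriptions of λ† agree
    (∀ X : QCat Q, lamd X = ((cpsf X.y).graph).transpose) ∧
    -- (a) strictly: (Tf)_! ∘ λ†_X = λ†_Y ∘ T(f_!)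
    (∀ (X Y : QCat Q) (f : QFun X Y),
      (pshf (cpsf f)).comp (lamd X) = (lamd Y).comp (cpsf (pshf f))) ∧
    -- (b) strictly: λ†_X ∘ T y_X = y_{TX}
    (∀ X : QCat Q, (lamd X).comp (cpsf X.y) = QCat.y X.Pd) ∧
    -- (c) strictly: s_{TX} ∘ (λ†_X)_! ∘ λ†_{PX} = λ†_X ∘ T s_X
    (∀ X : QCat Q,
      (supP X.Pd).comp ((pshf (lamd X)).comp (lamd X.P)) = (lamd X).comp (cpsf (supP X))) ∧
    -- (d) strictly: (e_X)_! = λ†_X ∘ e_{PX}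
    (∀ X : QCat Q, pshf X.yd = (lamd X).comp (QCat.yd X.P)) ∧
    -- (e) strictly: (m_X)_! ∘ λ†_{TX} ∘ T λ†_X = λ†_X ∘ m_{PX}
    (∀ X : QCat Q,
      (pshf (infPd X)).comp ((lamd X.Pd).comp (cpsf (lamd X))) = (lamd X).comp (infPd X.P)) := by
  refine ⟨fun X => ?_, fun X Y f => ?_, fun X => ?_, fun X => ?_, fun X => ?_, fun X => ?_⟩
  · -- λ† = transpose of the graph of (y_X)_†
    exact QFunP_ext fun s τ p δ => lamd_app τ δ
  · -- (a)
    refine QFunP_ext fun s τ p ε => le_antisymm ?_ ?_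
    · show (⨆ q, ⨆ δ : X.Pd.el q, Q.comp (((lamd X).app s τ).1 q δ)
          (Y.Pd.hom p q ε ((cpsf f).app q δ)))
        ≤ (((lamd Y).comp (cpsf (pshf f))).app s τ).1 p ε
      refine iSup_le fun q => iSup_le fun δ => ?_
      refine le_lamd.mpr fun q' ρ => ?_
      rw [cpsf_app, Quantaloid.iSup_comp]
      refine iSup_le fun r => ?_
      rw [Quantaloid.iSup_comp]
      refine iSup_le fun σ => ?_
      have h1 : Q.comp (τ.1 r σ) (Q.comp (((lamd X).app s τ).1 q δ)
          (Y.Pd.hom p q ε ((cpsf f).app q δ))) ≤ pairD ε ((pshf f).app r σ) := by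
        rw [← Q.comp_assoc]
        exact le_trans (Quantaloid.comp_le_comp (lamd_spec τ δ r σ) le_rfl) (pair_cpsf f ε δ σ)
      rw [Q.comp_assoc]
      exact le_trans (Quantaloid.comp_le_comp le_rfl h1) (pair_hom_right ε ((pshf f).app r σ) ρ)
    · have h0 : Q.idm p ≤ Y.Pd.hom p p ε ((cpsf f).app p ((cpsb f).app p ε)) := by
        refine idm_le_Pdhom fun a y => ?_
        rw [cpsf_app]
        refine iSup_le fun r => iSup_le fun x => ?_
        rw [cpsb_app]
        exact ε.2 r a (f.app r x) y
      have h2 : (((lamd Y).comp (cpsf (pshf f))).app s τ).1 p ε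
          ≤ ((lamd X).app s τ).1 p ((cpsb f).app p ε) := by
        refine le_lamd.mpr fun r σ => ?_
        refine le_trans (Quantaloid.comp_le_comp (cpsf_le (pshf f) τ σ) le_rfl) ?_
        exact le_trans (lamd_spec ((cpsf (pshf f)).app s τ) ε r ((pshf f).app r σ))
          (pair_pshf_le f ε σ)
      refine le_trans h2 ?_
      have h3 : ((lamd X).app s τ).1 p ((cpsb f).app p ε)
          ≤ Q.comp (((lamd X).app s τ).1 p ((cpsb f).app p ε))
            (Y.Pd.hom p p ε ((cpsf f).app p ((cpsb f).app p ε))) :=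
        le_trans (le_of_eq (Q.comp_idm _).symm) (Quantaloid.comp_le_comp le_rfl h0)
      refine le_trans h3 ?_
      show _ ≤ ⨆ q, ⨆ δ : X.Pd.el q, Q.comp (((lamd X).app s τ).1 q δ)
          (Y.Pd.hom p q ε ((cpsf f).app q δ))
      exact le_iSup_of_le p (le_iSup_of_le ((cpsb f).app p ε) le_rfl)
  · -- (b)
    refine QFunP_ext fun s δ0 p δ => le_antisymm ?_ ?_
    · refine le_Pdhom.mpr fun q x => ?_
      have h := lamd_spec ((cpsf X.y).app s δ0) δ q (X.y.app q x)
      rw [cpsfy_app, pair_y, pair_y] at h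
      exact h
    · refine le_lamd.mpr fun q σ => ?_
      rw [cpsfy_app]
      exact pair_hom_left δ δ0 σ
  · -- (c)
    refine QFunP_ext fun s T p δ => ?_
    have hl : (((supP X.Pd).comp ((pshf (lamd X)).comp (lamd X.P))).app s T).1 p δ
        = ⨆ r, ⨆ t : X.P.Pd.el r,
            Q.comp (((lamd X.P).app s T).1 r t) (((lamd X).app r t).1 p δ) :=
      supP_pshf (lamd X) ((lamd X.P).app s T) δ
    rw [hl]
    apply le_antisymm
    · refine iSup_le fun r => iSup_le fun t => ?_
      refine le_lamd.mpr fun q σ => ?_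
      rw [cpsf_app, Quantaloid.iSup_comp]
      refine iSup_le fun r' => ?_
      rw [Quantaloid.iSup_comp]
      refine iSup_le fun A => ?_
      have h1 : Q.comp (T.1 r' A)
          (Q.comp (((lamd X.P).app s T).1 r t) (((lamd X).app r t).1 p δ))
          ≤ pairD δ ((supP X).app r' A) := by
        rw [← Q.comp_assoc]
        refine le_trans (Quantaloid.comp_le_comp (lamd_spec T t r' A) le_rfl) ?_
        rw [pair_supP]
        simp only [pairD, Quantaloid.iSup_comp]
        refine iSup_le fun a => iSup_le fun σ' => ?_
        rw [Q.comp_assoc]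
        exact le_iSup_of_le a (le_iSup_of_le σ'
          (Quantaloid.comp_le_comp le_rfl (lamd_spec t δ a σ')))
      refine le_trans (le_of_eq (Q.comp_assoc _ _ _)) ?_
      exact le_trans (Quantaloid.comp_le_comp le_rfl h1) (pair_hom_right δ ((supP X).app r' A) σ)
    · have hA : (((lamd X).comp (cpsf (supP X))).app s T).1 p δ
          ≤ ((lamd X.P).app s T).1 p ((cpsf X.y).app p δ) := by
        refine le_lamd.mpr fun r' A => ?_
        refine le_trans (Quantaloid.comp_le_comp (cpsf_le (supP X) T A) le_rfl) ?_
        refine le_trans (lamd_spec ((cpsf (supP X)).app s T) δ r' ((supP X).app r' A)) ?_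
        exact le_of_eq (pair_supP' δ A)
      refine le_trans hA ?_
      have h0 : ((lamd X.P).app s T).1 p ((cpsf X.y).app p δ)
          ≤ Q.comp (((lamd X.P).app s T).1 p ((cpsf X.y).app p δ))
              (((lamd X).app p ((cpsf X.y).app p δ)).1 p δ) :=
        le_trans (le_of_eq (Q.comp_idm _).symm) (Quantaloid.comp_le_comp le_rfl (idm_le_lamd δ))
      exact le_trans h0 (le_iSup_of_le p (le_iSup_of_le ((cpsf X.y).app p δ) le_rfl))
  · -- (d)
    refine QFunP_ext fun s σ0 p δ => ?_
    have hl : ((pshf X.yd).app s σ0).1 p δ = pairD δ σ0 := by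
      rw [pshf_app]
      exact iSup_congr fun q => iSup_congr fun x => by rw [Pdhom_yd]
    rw [hl]
    apply le_antisymm
    · refine le_lamd.mpr fun q σ => ?_
      exact pair_hom_right δ σ0 σ
    · exact le_trans (le_comp_homrefl_left (Z := X.P) σ0 _)
        (lamd_spec ((QCat.yd X.P).app s σ0) δ s σ0)
  · -- (e)
    refine QFunP_ext fun s W p δ => le_antisymm ?_ ?_
    · show (⨆ q, ⨆ D : X.Pd.Pd.el q,
          Q.comp (((lamd X.Pd).app s ((cpsf (lamd X)).app s W)).1 q D)
            (X.Pd.hom p q δ ((infPd X).app q D)))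
        ≤ (((lamd X).comp (infPd X.P)).app s W).1 p δ
      refine iSup_le fun q => iSup_le fun D => ?_
      refine le_lamd.mpr fun q' σ => ?_
      rw [infPd_app, Quantaloid.iSup_comp]
      refine iSup_le fun r => ?_
      rw [Quantaloid.iSup_comp]
      refine iSup_le fun t => ?_
      have h1 : Q.comp (W.1 r t)
          (Q.comp (((lamd X.Pd).app s ((cpsf (lamd X)).app s W)).1 q D)
            (X.Pd.hom p q δ ((infPd X).app q D)))
          ≤ ⨆ a, ⨆ δ' : X.Pd.el a, Q.comp (((lamd X).app r t).1 a δ')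
              (Q.comp (D.1 a δ') (X.Pd.hom p q δ ((infPd X).app q D))) := by
        rw [← Q.comp_assoc]
        refine le_trans (Quantaloid.comp_le_comp (le_trans
          (Quantaloid.comp_le_comp (cpsf_le (lamd X) W t) le_rfl)
          (lamd_spec ((cpsf (lamd X)).app s W) D r ((lamd X).app r t))) le_rfl) ?_
        simp only [pairD, Quantaloid.iSup_comp]
        refine iSup_le fun a => iSup_le fun δ' => ?_
        rw [Q.comp_assoc]
        exact le_iSup_of_le a (le_iSup_of_le δ' le_rfl)
      have h2 : ∀ a (δ' : X.Pd.el a), Q.comp (t.1 q' σ)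
          (Q.comp (((lamd X).app r t).1 a δ')
            (Q.comp (D.1 a δ') (X.Pd.hom p q δ ((infPd X).app q D)))) ≤ pairD δ σ := by
        intro a δ'
        rw [← Q.comp_assoc]
        refine le_trans (Quantaloid.comp_le_comp (lamd_spec t δ' q' σ) le_rfl) ?_
        simp only [pairD, Quantaloid.iSup_comp]
        refine iSup_le fun b => iSup_le fun x => ?_
        rw [Q.comp_assoc]
        have h3 : Q.comp (δ'.1 b x)
            (Q.comp (D.1 a δ') (X.Pd.hom p q δ ((infPd X).app q D))) ≤ δ.1 b x := by
          rw [← Q.comp_assoc]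
          refine le_trans (Quantaloid.comp_le_comp ?_ le_rfl)
            (Pdhom_app δ ((infPd X).app q D) x)
          rw [infPd_app]
          exact le_iSup_of_le a (le_iSup_of_le δ' le_rfl)
        exact le_iSup_of_le b (le_iSup_of_le x (Quantaloid.comp_le_comp le_rfl h3))
      refine le_trans (le_of_eq (Q.comp_assoc _ _ _)) ?_
      refine le_trans (Quantaloid.comp_le_comp le_rfl h1) ?_
      rw [Quantaloid.comp_iSup]
      refine iSup_le fun a => ?_
      rw [Quantaloid.comp_iSup]
      exact iSup_le fun δ' => h2 a δ'
    · have h0 : Q.idm p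
          ≤ X.Pd.hom p p δ ((infPd X).app p ((QCat.yd X.Pd).app p δ)) := by
        refine idm_le_Pdhom fun b x => ?_
        rw [infPd_app]
        refine iSup_le fun a => iSup_le fun δ' => ?_
        exact Pdhom_app δ δ' x
      have h2 : (((lamd X).comp (infPd X.P)).app s W).1 p δ
          ≤ ((lamd X.Pd).app s ((cpsf (lamd X)).app s W)).1 p ((QCat.yd X.Pd).app p δ) := by
        refine le_lamd.mpr fun r ρ => ?_
        rw [cpsf_app, Quantaloid.iSup_comp]
        refine iSup_le fun r0 => ?_
        rw [Quantaloid.iSup_comp]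
        refine iSup_le fun t => ?_
        have h4 : Q.comp (W.1 r0 t) ((((lamd X).comp (infPd X.P)).app s W).1 p δ)
            ≤ ((lamd X).app r0 t).1 p δ := by
          refine le_lamd.mpr fun q' σ => ?_
          rw [← Q.comp_assoc]
          refine le_trans (Quantaloid.comp_le_comp ?_ le_rfl)
            (lamd_spec ((infPd X.P).app s W) δ q' σ)
          rw [infPd_app]
          exact le_iSup_of_le r0 (le_iSup_of_le t le_rfl)
        rw [Q.comp_assoc]
        refine le_trans (Quantaloid.comp_le_comp le_rfl h4) ?_
        refine le_trans (Phom_app ((lamd X).app r0 t) ρ δ) ?_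
        exact le_trans (le_comp_homrefl_right (Z := X.Pd) δ _)
          (le_pairD ((QCat.yd X.Pd).app p δ) ρ δ)
      refine le_trans h2 ?_
      have h5 : ((lamd X.Pd).app s ((cpsf (lamd X)).app s W)).1 p ((QCat.yd X.Pd).app p δ)
          ≤ Q.comp
            (((lamd X.Pd).app s ((cpsf (lamd X)).app s W)).1 p ((QCat.yd X.Pd).app p δ))
            (X.Pd.hom p p δ ((infPd X).app p ((QCat.yd X.Pd).app p δ))) :=
        le_trans (le_of_eq (Q.comp_idm _).symm) (Quantaloid.comp_le_comp le_rfl h0)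
      refine le_trans h5 ?_
      show _ ≤ ⨆ q, ⨆ D : X.Pd.Pd.el q,
          Q.comp (((lamd X.Pd).app s ((cpsf (lamd X)).app s W)).1 q D)
            (X.Pd.hom p q δ ((infPd X).app q D))
      exact le_iSup_of_le p (le_iSup_of_le ((QCat.yd X.Pd).app p δ) le_rfl)

end QT
end
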